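/- Let m > 2 and 0 < ε < r(1/cos(π/m) − 1) for some r > 0. Let p ∈ ℝ² and let a_1, …, a_m be m points evenly distributed on the circle of radius 2r centered at p (i.e., a_j = p + 2r·(cos(2πj/m), sin(2πj/m))). Then for any r' with r ≤ r' ≤ r + ε and any index j₀, there exists a point q ∈ ℝ² with ‖q − p‖ = r', ‖q − a_{j₀}‖ = r', and ‖q − a_j‖ > r' for all j ≠ j₀. -/

import Mathlib

set_option maxHeartbeats 1000000


open Real

noncomputable section

abbrev Pt (d : ℕ) := EuclideanSpace ℝ (Fin d)

/-- One step of a coupling: advance the first and/or the second index by exactly 1. -/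
def CouplingStep (a b : ℕ × ℕ) : Prop :=
  (b.1 = a.1 + 1 ∧ b.2 = a.2) ∨ (b.1 = a.1 ∧ b.2 = a.2 + 1) ∨
    (b.1 = a.1 + 1 ∧ b.2 = a.2 + 1)

/-- A coupling between a curve with `k` vertices and one with `l` vertices
(0-based indices): starts at `(0,0)`, ends at `(k-1, l-1)`, monotone unit steps. -/
def IsCoupling (k l : ℕ) (c : List (ℕ × ℕ)) : Prop :=
  c.head? = some (0, 0) ∧ c.getLast? = some (k - 1, l - 1) ∧
    c.Chain' CouplingStep ∧ ∀ ij ∈ c, ij.1 < k ∧ ij.2 < l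

/-- The maximum distance over the coupled pairs of a coupling. -/
def couplingCost {d : ℕ} (P Q : List (Pt d)) (c : List (ℕ × ℕ)) : ℝ :=
  c.foldr (fun ij acc => max (dist (P.getD ij.1 0) (Q.getD ij.2 0)) acc) 0

/-- The discrete Fréchet distance between two polygonal curves, given as lists
of their vertices. -/
def dDF {d : ℕ} (P Q : List (Pt d)) : ℝ :=
  sInf { m : ℝ | ∃ c, IsCoupling P.length Q.length c ∧ m = couplingCost P Q c }

/-- The set of nearest neighbors of a query curve `Q` in a finite set `S` of
curves, under the discrete Fréchet distance. -/
def NN {d : ℕ} (S : Finset (List (Pt d))) (Q : List (Pt d)) : Set (List (Pt d)) :=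
  { P | P ∈ S ∧ ∀ P' ∈ S, dDF Q P ≤ dDF Q P' }

/-- The point of `ℝ²` with given coordinates. -/
def e2 (x y : ℝ) : Pt 2 := (WithLp.equiv 2 (Fin 2 → ℝ)).symm ![x, y]

/-- The point of `ℝ¹` with given coordinate. -/
def e1 (x : ℝ) : Pt 1 := (WithLp.equiv 2 (Fin 1 → ℝ)).symm ![x]

lemma e2_sub (x y x' y' : ℝ) : e2 x y - e2 x' y' = e2 (x - x') (y - y') := by
  ext i; fin_cases i <;> simp [e2]

lemma e2_smul (c x y : ℝ) : c • e2 x y = e2 (c * x) (c * y) := by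
  ext i; fin_cases i <;> simp [e2]

lemma e2_norm_sq (x y : ℝ) : ‖e2 x y‖ ^ 2 = x ^ 2 + y ^ 2 := by
  rw [EuclideanSpace.norm_eq, Real.sq_sqrt (by positivity)]
  simp [e2, Fin.sum_univ_two, sq_abs]

lemma aux_cos (c x : ℝ) (hc0 : 0 ≤ c) (h1 : c ≤ x) (h2 : x ≤ 2 * π - c) :
    Real.cos x ≤ Real.cos c := by
  rcases le_or_gt x π with hx | hx
  · exact Real.cos_le_cos_of_nonneg_of_le_pi hc0 hx h1
  · have : Real.cos x = Real.cos (2 * π - x) := by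
      rw [Real.cos_sub]; simp [Real.cos_two_pi, Real.sin_two_pi]
    rw [this]
    exact Real.cos_le_cos_of_nonneg_of_le_pi hc0 (by linarith) (by linarith)

lemma norm_sub_polar (a b α β : ℝ) :
    ‖e2 (a * Real.cos α) (a * Real.sin α) - e2 (b * Real.cos β) (b * Real.sin β)‖ ^ 2
      = a ^ 2 + b ^ 2 - 2 * a * b * Real.cos (α - β) := by
  rw [e2_sub, e2_norm_sq, Real.cos_sub]
  linear_combination a ^ 2 * Real.sin_sq_add_cos_sq α + b ^ 2 * Real.sin_sq_add_cos_sq β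


/-- one can choose a point `q` at distance exactly `r'` from both
the center `p` and one chosen point `a_{j₀}` of `m` points evenly distributed
on the circle of radius `2r` around `p`, with all other points strictly
farther than `r'`. -/
theorem first_vertex_choice (m : ℕ) (hm : 2 < m) (r ε : ℝ) (hr : 0 < r)
    (hε : 0 < ε) (hε' : ε < r * (1 / Real.cos (π / m) - 1)) (p : Pt 2)
    (r' : ℝ) (hr'₁ : r ≤ r') (hr'₂ : r' ≤ r + ε)
    (j₀ : ℕ) (hj₀ : 1 ≤ j₀) (hj₀m : j₀ ≤ m) :
    ∃ q : Pt 2, dist q p = r' ∧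
      dist q (p + (2 * r) • e2 (Real.cos (2 * π * j₀ / m)) (Real.sin (2 * π * j₀ / m))) = r' ∧
      ∀ j : ℕ, 1 ≤ j → j ≤ m → j ≠ j₀ →
        r' < dist q (p + (2 * r) • e2 (Real.cos (2 * π * j / m)) (Real.sin (2 * π * j / m))) := by
  have hmR : (0:ℝ) < m := by positivity
  have hm3 : (3:ℝ) ≤ m := by exact_mod_cast hm
  have hr' : 0 < r' := lt_of_lt_of_le hr hr'₁
  have hπm0 : 0 < π / m := by positivity
  have hπmπ : π / m < π / 2 := by
    apply div_lt_div_of_pos_left Real.pi_pos (by norm_num) (by linarith)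
  have hcosπm : 0 < Real.cos (π / m) := Real.cos_pos_of_mem_Ioo ⟨by linarith, hπmπ⟩
  -- cos (π/m) < r / r'
  have hcc : Real.cos (π / m) * (1 / Real.cos (π / m)) = 1 :=
    mul_one_div_cancel (ne_of_gt hcosπm)
  have hkey : Real.cos (π / m) < r / r' := by
    rw [lt_div_iff₀ hr']
    nlinarith
  have hrr'le : r / r' ≤ 1 := (div_le_one hr').mpr hr'₁
  have hrr'pos : 0 < r / r' := div_pos hr hr'
  set δ := Real.arccos (r / r') with hδdef
  have hδcos : Real.cos δ = r / r' := Real.cos_arccos (by linarith) hrr'le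
  have hδ0 : 0 ≤ δ := Real.arccos_nonneg _
  have hδlt : δ < π / m := by
    have h := Real.strictAntiOn_cos.lt_iff_gt
      (a := π / m) (b := δ) ⟨le_of_lt hπm0, by linarith [Real.pi_pos]⟩
      ⟨hδ0, Real.arccos_le_pi _⟩
    rw [← h, hδcos]; exact hkey
  set s := 2 * π / (m:ℝ) with hs
  have hs0 : 0 < s := by positivity
  set α := 2 * π * (j₀:ℝ) / m + δ with hαdef
  clear_value δ s α
  refine ⟨p + r' • e2 (Real.cos α) (Real.sin α), ?_, ?_, ?_⟩
  · rw [dist_eq_norm, add_sub_cancel_left, e2_smul]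
    have h2 : ‖e2 (r' * Real.cos α) (r' * Real.sin α)‖ ^ 2 = r' ^ 2 := by
      rw [e2_norm_sq]; nlinarith [Real.sin_sq_add_cos_sq α]
    calc ‖e2 (r' * Real.cos α) (r' * Real.sin α)‖
        = √(‖e2 (r' * Real.cos α) (r' * Real.sin α)‖ ^ 2) :=
          (Real.sqrt_sq (norm_nonneg _)).symm
      _ = r' := by rw [h2, Real.sqrt_sq hr'.le]
  · rw [dist_eq_norm, add_sub_add_comm, sub_self, zero_add, e2_smul, e2_smul]
    have hsq : ‖e2 (r' * Real.cos α) (r' * Real.sin α) -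
        e2 (2 * r * Real.cos (2 * π * j₀ / m)) (2 * r * Real.sin (2 * π * j₀ / m))‖ ^ 2
        = r' ^ 2 := by
      rw [norm_sub_polar]
      have : α - 2 * π * (j₀:ℝ) / m = δ := by rw [hαdef]; ring
      rw [this, hδcos]
      field_simp
      ring
    calc ‖e2 (r' * Real.cos α) (r' * Real.sin α) -
        e2 (2 * r * Real.cos (2 * π * j₀ / m)) (2 * r * Real.sin (2 * π * j₀ / m))‖
        = √(‖e2 (r' * Real.cos α) (r' * Real.sin α) -
        e2 (2 * r * Real.cos (2 * π * j₀ / m)) (2 * r * Real.sin (2 * π * j₀ / m))‖ ^ 2) :=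
          (Real.sqrt_sq (norm_nonneg _)).symm
      _ = r' := by rw [hsq, Real.sqrt_sq hr'.le]
  · intro j hj1 hjm hjj₀
    rw [dist_eq_norm, add_sub_add_comm, sub_self, zero_add, e2_smul, e2_smul]
    set t : ℝ := (j:ℝ) - (j₀:ℝ) with ht
    clear_value t
    -- bounds on t
    have hbound : Real.cos (α - 2 * π * j / m) < r / r' := by
      have hαθ : α - 2 * π * (j:ℝ) / m = δ - s * t := by rw [hαdef, hs, ht]; field_simp; ring
      rw [hαθ]
      have hx : Real.cos (δ - s * t) = Real.cos |s * t - δ| := by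
        rw [Real.cos_abs, ← Real.cos_neg]; ring_nf
      rw [hx]
      have hmain : Real.cos |s * t - δ| ≤ Real.cos (π / m) := by
        apply aux_cos _ _ (le_of_lt hπm0)
        · -- π/m ≤ |s*t − δ|
          rcases lt_or_gt_of_ne hjj₀ with hlt | hgt
          · -- j < j₀ : t ≤ -1, t ≥ 1 - m
            have ht1 : t ≤ -1 := by
              have : (j:ℝ) + 1 ≤ (j₀:ℝ) := by exact_mod_cast hlt
              linarith
            have hst : s * t ≤ -s := by nlinarith
            have : s * t - δ ≤ -s := by linarith
            have habs : |s * t - δ| = -(s * t - δ) := abs_of_nonpos (by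
              have : s ≤ 2 * π := by
                rw [hs]; rw [div_le_iff₀ hmR]; nlinarith [Real.pi_pos]
              linarith [hδ0, hs0])
            rw [habs]
            have hsπ : π / m ≤ s := by rw [hs]; rw [div_le_div_iff₀ hmR hmR]; nlinarith [Real.pi_pos]
            linarith
          · -- j > j₀ : t ≥ 1
            have ht1 : 1 ≤ t := by
              have : (j₀:ℝ) + 1 ≤ (j:ℝ) := by exact_mod_cast hgt
              linarith
            have hst : s ≤ s * t := by nlinarith
            have hsπ : π / m < s - δ := by
              have hse : s = π / m + π / m := by rw [hs]; ring
              linarith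
            have : π / m ≤ s * t - δ := by linarith
            rw [abs_of_nonneg (by linarith [hπm0])]
            exact this
        · -- |s*t − δ| ≤ 2π − π/m
          have htabs : |t| ≤ (m:ℝ) - 1 := by
            rw [abs_le]
            constructor
            · have : (1:ℝ) ≤ (j:ℝ) := by exact_mod_cast hj1
              have h2 : (j₀:ℝ) ≤ m := by exact_mod_cast hj₀m
              rw [ht]; linarith
            · have : (j:ℝ) ≤ m := by exact_mod_cast hjm
              have h2 : (1:ℝ) ≤ (j₀:ℝ) := by exact_mod_cast hj₀
              rw [ht]; linarith
          have h1 : |s * t - δ| ≤ s * |t| + δ := by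
            calc |s * t - δ| ≤ |s * t| + |δ| := abs_sub _ _
              _ = s * |t| + δ := by rw [abs_of_nonneg hδ0, abs_mul, abs_of_nonneg hs0.le]
          have h2 : s * |t| ≤ s * ((m:ℝ) - 1) := by nlinarith [abs_nonneg t]
          have h3 : s * ((m:ℝ) - 1) = 2 * π - s := by rw [hs]; field_simp
          have hsπ : π / m ≤ s - δ := by
            have hse : s = π / m + π / m := by rw [hs]; ring
            linarith
          linarith
      linarith [hkey, hmain]
    have hsq : r' ^ 2 < ‖e2 (r' * Real.cos α) (r' * Real.sin α) -
        e2 (2 * r * Real.cos (2 * π * j / m)) (2 * r * Real.sin (2 * π * j / m))‖ ^ 2 := by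
      rw [norm_sub_polar]
      have : 2 * r' * (2 * r) * Real.cos (α - 2 * π * j / m) < 4 * r ^ 2 := by
        have h4 : 0 < 2 * r' * (2 * r) := by positivity
        have := mul_lt_mul_of_pos_left hbound h4
        calc 2 * r' * (2 * r) * Real.cos (α - 2 * π * ↑j / ↑m)
            < 2 * r' * (2 * r) * (r / r') := this
          _ = 4 * r ^ 2 := by field_simp; ring
      nlinarith
    exact lt_of_pow_lt_pow_left₀ 2 (norm_nonneg _) hsq
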